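/- Let k be a field of characteristic p > 0 and let f_1,…,f_n ∈ k[[t_1,…,t_n]] be arbitrary formal power series. Then the coefficient of t_1^{p−1} ⋯ t_n^{p−1} in det(∂f_i/∂t_j) is zero. -/

import Mathlib

/-- The formal partial derivative of a multivariate power series with respect to the
`j`-th variable, defined coefficientwise:
`coeff d (∂_j f) = (d j + 1) * coeff (d + single j 1) f`. -/
noncomputable def mvPowerSeriesPderiv {σ : Type*} {R : Type*} [CommSemiring R]
    (j : σ) (f : MvPowerSeries σ R) : MvPowerSeries σ R :=
  fun d => ((d j + 1 : ℕ) : R) * MvPowerSeries.coeff (d + Finsupp.single j 1) f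

open MvPowerSeries Finsupp

lemma coeff_pderiv {σ R : Type*} [CommSemiring R] (j : σ) (f : MvPowerSeries σ R)
    (d : σ →₀ ℕ) :
    coeff d (mvPowerSeriesPderiv j f) = ((d j + 1 : ℕ) : R) * coeff (d + single j 1) f := rfl

lemma pderiv_monomial {σ R : Type*} [CommSemiring R] [DecidableEq σ] (j : σ) (a : σ →₀ ℕ) (x : R) :
    mvPowerSeriesPderiv j (monomial a x) = monomial (a - single j 1) (((a j : ℕ) : R) * x) := by
  ext d
  rw [_root_.coeff_pderiv, coeff_monomial, coeff_monomial]
  by_cases h : d + single j 1 = a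
  · have h1 : a j = d j + 1 := by rw [← h]; simp
    have h2 : d = a - single j 1 := by
      ext i; rw [tsub_apply, ← h, Finsupp.add_apply, single_apply]; split_ifs <;> omega
    rw [if_pos h, if_pos h2, h1]
  · rw [if_neg h, mul_zero]
    by_cases h2 : d = a - single j 1
    · rw [if_pos h2]
      have aj0 : a j = 0 := by
        by_contra hne
        apply h
        ext i
        rw [Finsupp.add_apply, single_apply, h2, tsub_apply, single_apply]
        split_ifs with hi <;> [skip; omega]
        subst hi; omega
      rw [aj0, Nat.cast_zero, zero_mul]
    · rw [if_neg h2]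

lemma prod_monomial {σ R ι : Type*} [CommSemiring R] (s : Finset ι)
    (b : ι → (σ →₀ ℕ)) (x : ι → R) :
    ∏ i ∈ s, monomial (b i) (x i) = monomial (∑ i ∈ s, b i) (∏ i ∈ s, x i) := by
  classical
  induction s using Finset.cons_induction with
  | empty => simp
  | cons a s ha ih =>
      rw [Finset.prod_cons, ih, monomial_mul_monomial, Finset.sum_cons, Finset.prod_cons]

lemma pderiv_sum {σ R ι : Type*} [CommSemiring R] (j : σ) (s : Finset ι)
    (F : ι → MvPowerSeries σ R) :
    mvPowerSeriesPderiv j (∑ x ∈ s, F x) = ∑ x ∈ s, mvPowerSeriesPderiv j (F x) := by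
  ext d
  rw [_root_.coeff_pderiv, map_sum, map_sum, Finset.mul_sum]
  exact Finset.sum_congr rfl fun x _ => (_root_.coeff_pderiv j (F x) d).symm


lemma coeff_det_congr {k : Type*} [CommRing k] {n : ℕ} (d : Fin n →₀ ℕ)
    (M N : Matrix (Fin n) (Fin n) (MvPowerSeries (Fin n) k))
    (h : ∀ i j e, e ≤ d → coeff e (M i j) = coeff e (N i j)) :
    coeff d M.det = coeff d N.det := by
  classical
  rw [Matrix.det_apply, Matrix.det_apply, map_sum, map_sum]
  refine Finset.sum_congr rfl fun σ _ => ?_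
  rw [Units.smul_def, Units.smul_def, map_zsmul, map_zsmul]
  congr 1
  rw [coeff_prod, coeff_prod]
  refine Finset.sum_congr rfl fun l hl => ?_
  have hsum : Finset.univ.sum l = d := (Finset.mem_finsuppAntidiag.mp hl).1
  refine Finset.prod_congr rfl fun i _ => ?_
  exact h _ _ _ (hsum ▸ Finset.single_le_sum (f := fun i => l i)
    (fun _ _ => zero_le) (Finset.mem_univ i))

lemma key_det_zero (k : Type*) [Field k] (p : ℕ) (hp : p.Prime) [CharP k p]
    (n : ℕ) (hn : 1 ≤ n) (a : Fin n → (Fin n →₀ ℕ)) (c : Fin n → k) :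
    MvPowerSeries.coeff (Finsupp.equivFunOnFinite.symm fun _ : Fin n => p - 1)
      (Matrix.det (Matrix.of fun i j : Fin n =>
        mvPowerSeriesPderiv j (monomial (a i) (c i)))) = 0 := by
  classical
  set d : Fin n →₀ ℕ := Finsupp.equivFunOnFinite.symm fun _ : Fin n => p - 1 with hd
  have hdj : ∀ j, d j = p - 1 := fun j => by simp [hd]
  rw [Matrix.det_apply, map_sum]
  have hterm : ∀ σ ∈ (Finset.univ : Finset (Equiv.Perm (Fin n))),
      coeff d (Equiv.Perm.sign σ • ∏ i, (Matrix.of fun i j : Fin n =>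
          mvPowerSeriesPderiv j (monomial (a i) (c i))) (σ i) i)
      = Equiv.Perm.sign σ • (if d = ∑ i, (a (σ i) - single i 1)
          then ∏ i, ((((a (σ i)) i : ℕ) : k) * c (σ i)) else 0) := by
    intro σ _
    rw [Units.smul_def, Units.smul_def, map_zsmul]
    congr 1
    simp only [Matrix.of_apply]
    rw [Finset.prod_congr rfl fun i _ => pderiv_monomial i (a (σ i)) (c (σ i)),
      _root_.prod_monomial, coeff_monomial]
  rw [Finset.sum_congr rfl hterm]
  -- product vanishes if some diagonal exponent is zero
  have hprod : ∀ σ : Equiv.Perm (Fin n), ∀ i, (a (σ i)) i = 0 →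
      ∏ i, ((((a (σ i)) i : ℕ) : k) * c (σ i)) = 0 := by
    intro σ i hi
    exact Finset.prod_eq_zero (Finset.mem_univ i) (by rw [hi]; simp)
  -- coordinate computation of the exponent sum
  have hSj : ∀ σ : Equiv.Perm (Fin n), ∀ j, (∀ i, 1 ≤ (a (σ i)) i) →
      (∑ i, (a (σ i) - single i 1) : Fin n →₀ ℕ) j + 1 = (∑ i, a i : Fin n →₀ ℕ) j := by
    intro σ j hz
    have h1 : (∑ i, (a (σ i) - single i 1) : Fin n →₀ ℕ) j
        = ∑ i, ((a (σ i)) j - if i = j then 1 else 0) := by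
      rw [Finsupp.finset_sum_apply]
      exact Finset.sum_congr rfl fun i _ => by rw [tsub_apply, single_apply]
    have h2 : (∑ i : Fin n, a i) j = ∑ i, (a (σ i)) j := by
      rw [Finsupp.finset_sum_apply, ← Equiv.sum_comp σ (fun i => (a i) j)]
    rw [h1, h2, ← Finset.add_sum_erase _ _ (Finset.mem_univ j),
      ← Finset.add_sum_erase _ (fun i => (a (σ i)) j) (Finset.mem_univ j)]
    have h3 : ∑ i ∈ Finset.univ.erase j, ((a (σ i)) j - if i = j then 1 else 0)
        = ∑ i ∈ Finset.univ.erase j, (a (σ i)) j :=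
      Finset.sum_congr rfl fun i hi => by
        rw [if_neg (Finset.mem_erase.mp hi).1, Nat.sub_zero]
    rw [h3, if_pos rfl]
    have := hz j
    omega
  by_cases hP : ∀ j, (∑ i : Fin n, a i) j = p
  · have h1 : ∀ σ ∈ Finset.univ, (Equiv.Perm.sign σ • (if d = ∑ i, (a (σ i) - single i 1)
          then ∏ i, ((((a (σ i)) i : ℕ) : k) * c (σ i)) else 0))
        = Equiv.Perm.sign σ • ∏ i, (Matrix.of fun i' i : Fin n =>
            (((a i') i : ℕ) : k) * c i') (σ i) i := by
      intro σ _
      congr 1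
      by_cases hz : ∀ i, 1 ≤ (a (σ i)) i
      · rw [if_pos]
        · exact Finset.prod_congr rfl fun i _ => rfl
        · ext j
          have := hSj σ j hz
          have hpj := hP j
          have := hdj j
          have hp2 := hp.two_le
          omega
      · push_neg at hz
        obtain ⟨i, hi⟩ := hz
        have hz0 : (a (σ i)) i = 0 := Nat.lt_one_iff.mp hi
        have hr : ∏ i, (Matrix.of fun i' i : Fin n => (((a i') i : ℕ) : k) * c i') (σ i) i = 0 :=
          Finset.prod_eq_zero
            (f := fun j : Fin n => (Matrix.of fun i' i : Fin n => (((a i') i : ℕ) : k) * c i') (σ j) j)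
            (Finset.mem_univ i)
            (by show (((a (σ i)) i : ℕ) : k) * c (σ i) = 0; rw [hz0]; simp)
        rw [hr, hprod σ i hz0]
        simp
    rw [Finset.sum_congr rfl h1, ← Matrix.det_apply]
    -- the determinant of the scaled exponent matrix vanishes
    have hB : Matrix.det (Matrix.of fun i' i : Fin n => (((a i') i : ℕ) : k)) = 0 := by
      rw [← Matrix.exists_vecMul_eq_zero_iff]
      refine ⟨fun _ => 1, fun h => one_ne_zero (congrFun h ⟨0, hn⟩), funext fun j => ?_⟩
      show ∑ i, (1 : k) * (((a i) j : ℕ) : k) = 0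
      simp only [one_mul]
      rw [← Nat.cast_sum, ← Finsupp.finset_sum_apply, hP j, CharP.cast_eq_zero]
    have hfac : (Matrix.of fun i' i : Fin n => (((a i') i : ℕ) : k) * c i')
        = Matrix.diagonal c * Matrix.of fun i' i : Fin n => (((a i') i : ℕ) : k) := by
      ext i' i
      rw [Matrix.diagonal_mul]
      exact mul_comm _ _
    rw [hfac, Matrix.det_mul, hB, mul_zero]
  · push_neg at hP
    obtain ⟨j0, hj0⟩ := hP
    apply Finset.sum_eq_zero
    intro σ _
    by_cases hz : ∀ i, 1 ≤ (a (σ i)) i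
    · rw [if_neg, smul_zero]
      intro hEq
      have h4 : d j0 + 1 = (∑ i : Fin n, a i) j0 := by rw [hEq]; exact hSj σ j0 hz
      have := hdj j0
      have hp2 := hp.two_le
      omega
    · push_neg at hz
      obtain ⟨i, hi⟩ := hz
      rw [hprod σ i (Nat.lt_one_iff.mp hi)]
      simp

lemma coeff_sum_monomial {σ R : Type*} [CommSemiring R] [DecidableEq σ]
    (S : Finset (σ →₀ ℕ)) (F : MvPowerSeries σ R) {b : σ →₀ ℕ} (hb : b ∈ S) :
    coeff b (∑ a ∈ S, monomial a (coeff a F)) = coeff b F := by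
  rw [map_sum, Finset.sum_eq_single b
    (fun a _ ha => coeff_monomial_ne (Ne.symm ha) _)
    (fun h => absurd hb h), coeff_monomial_same]


/-- Let `k` be a field of characteristic `p > 0` and `f₁, …, fₙ ∈ k[[t₁, …, tₙ]]`
arbitrary formal power series (`n ≥ 1`).  Then the coefficient of
`t₁^{p-1} ⋯ tₙ^{p-1}` in `det (∂ f i / ∂ t j)` is zero. -/
theorem stmt3 (k : Type*) [Field k] (p : ℕ) (hp : p.Prime) [CharP k p]
    (n : ℕ) (hn : 1 ≤ n) (f : Fin n → MvPowerSeries (Fin n) k) :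
    MvPowerSeries.coeff (Finsupp.equivFunOnFinite.symm fun _ : Fin n => p - 1)
      (Matrix.det (Matrix.of fun i j : Fin n => mvPowerSeriesPderiv j (f i))) = 0 := by
  classical
  set d : Fin n →₀ ℕ := Finsupp.equivFunOnFinite.symm fun _ : Fin n => p - 1 with hd
  set D : Fin n →₀ ℕ := Finsupp.equivFunOnFinite.symm fun _ : Fin n => p with hD
  set S : Finset (Fin n →₀ ℕ) := Finset.Iic D with hS
  set g : Fin n → MvPowerSeries (Fin n) k :=
    fun i => ∑ a ∈ S, monomial a (coeff a (f i)) with hg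
  have step1 : coeff d (Matrix.det (Matrix.of fun i j : Fin n => mvPowerSeriesPderiv j (f i)))
      = coeff d (Matrix.det (Matrix.of fun i j : Fin n => mvPowerSeriesPderiv j (g i))) := by
    apply coeff_det_congr
    intro i j e he
    simp only [Matrix.of_apply]
    rw [_root_.coeff_pderiv, _root_.coeff_pderiv]
    congr 1
    have hmem : e + single j 1 ∈ S := by
      rw [hS, Finset.mem_Iic]
      rw [Finsupp.le_def]
      intro s
      have h1 : e s ≤ d s := Finsupp.le_def.mp he s
      have h2 : d s = p - 1 := by simp [hd]
      have h3 : D s = p := by simp [hD]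
      have h4 : (single j 1 : Fin n →₀ ℕ) s ≤ 1 := by
        rw [single_apply]; split_ifs <;> omega
      rw [Finsupp.add_apply, h3]
      have hp1 := hp.two_le
      omega
    rw [hg]
    exact (coeff_sum_monomial S (f i) hmem).symm
  rw [step1]
  have hrow : ∀ i, (fun j => mvPowerSeriesPderiv j (g i))
      = ∑ a ∈ S, (fun j => mvPowerSeriesPderiv j (monomial a (coeff a (f i)))) := by
    intro i
    funext j
    rw [Finset.sum_apply, hg]
    exact pderiv_sum j S _
  have hdet : Matrix.det (Matrix.of fun i j : Fin n => mvPowerSeriesPderiv j (g i))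
      = ∑ r ∈ Fintype.piFinset (fun _ : Fin n => S),
          Matrix.det (Matrix.of fun i j : Fin n =>
            mvPowerSeriesPderiv j (monomial (r i) (coeff (r i) (f i)))) := by
    have h0 : (Matrix.det (Matrix.of fun i j : Fin n => mvPowerSeriesPderiv j (g i)))
        = Matrix.detRowAlternating.toMultilinearMap
            (fun i => ∑ a ∈ S, (fun j => mvPowerSeriesPderiv j (monomial a (coeff a (f i))))) := by
      congr 1
      funext i
      exact hrow i
    rw [h0, MultilinearMap.map_sum_finset]
    exact Finset.sum_congr rfl fun r _ => rfl
  rw [hdet, map_sum]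
  apply Finset.sum_eq_zero
  intro r _
  exact key_det_zero k p hp n hn r (fun i => coeff (r i) (f i))
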